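/- If u₂, u₃ are independent standard normal random variables, p ∈ [0,1], and c, γ satisfy 0 < c(1-p) < 2γ, then E_{u₃}[ (1/c)·log E_{u₂} exp( c·(√(1-p)·u₂ + √p·u₃)²/(4γ) ) ] = -(1/(2c))·log((2γ - c(1-p))/(2γ)) + p/(2(2γ - c(1-p))). -/

import Mathlib

open Real MeasureTheory ProbabilityTheory

lemma integral_rexp_quadratic {b : ℝ} (hb : b < 0) (c d : ℝ) :
    ∫ x : ℝ, rexp (b * x ^ 2 + c * x + d)
      = Real.sqrt (π / -b) * rexp (d - c ^ 2 / (4 * b)) := by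
  have h := integral_cexp_quadratic (b := (b:ℂ)) (by simpa using hb) (c:ℂ) (d:ℂ)
  have hL : ∫ x : ℝ, Complex.exp ((b:ℂ) * x ^ 2 + c * x + d)
      = ((∫ x : ℝ, rexp (b * x ^ 2 + c * x + d) : ℝ) : ℂ) := by
    calc ∫ x : ℝ, Complex.exp ((b:ℂ) * x ^ 2 + c * x + d)
        = ∫ x : ℝ, ((rexp (b * x ^ 2 + c * x + d) : ℝ) : ℂ) := by
          congr 1; ext x; rw [Complex.ofReal_exp]; push_cast; ring_nf
      _ = _ := integral_ofReal
  have hπb : (0:ℝ) ≤ π / -b := by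
    have : (0:ℝ) < -b := by linarith
    positivity
  have hR : ((π:ℂ) / -(b:ℂ)) ^ (1 / 2 : ℂ) = ((Real.sqrt (π / -b) : ℝ) : ℂ) := by
    rw [Real.sqrt_eq_rpow]
    rw [Complex.ofReal_cpow hπb]
    push_cast
    norm_num
  have hexp : Complex.exp ((d:ℂ) - (c:ℂ) ^ 2 / (4 * (b:ℂ)))
      = ((rexp (d - c ^ 2 / (4 * b)) : ℝ) : ℂ) := by
    rw [Complex.ofReal_exp]; push_cast; ring_nf
  rw [hL, hR, hexp, ← Complex.ofReal_mul] at h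
  exact_mod_cast h

lemma integral_gaussianReal01 (g : ℝ → ℝ) :
    ∫ x, g x ∂(gaussianReal 0 1) = ∫ x, gaussianPDFReal 0 1 x * g x := by
  rw [gaussianReal_of_var_ne_zero 0 one_ne_zero, gaussianPDF_def]
  have h : (fun x => ENNReal.ofReal (gaussianPDFReal 0 1 x))
      = fun x => ((fun y => (gaussianPDFReal 0 1 y).toNNReal) x : ENNReal) := rfl
  rw [h, integral_withDensity_eq_integral_smul
    ((measurable_gaussianPDFReal 0 1).real_toNNReal) g]
  congr 1; ext x
  rw [NNReal.smul_def, smul_eq_mul, Real.coe_toNNReal _ (gaussianPDFReal_nonneg _ _ _)]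

lemma gaussian_second_moment : ∫ x, gaussianPDFReal 0 1 x * x ^ 2 = 1 := by
  have h1 : ∀ x : ℝ, gaussianPDFReal 0 1 x * x ^ 2
      = (Real.sqrt (2 * π))⁻¹ * (x ^ 2 * rexp (-(1/2) * x ^ 2)) := by
    intro x
    simp only [gaussianPDFReal]
    push_cast
    ring_nf
  simp_rw [h1, MeasureTheory.integral_const_mul]
  have h2 : ∫ x : ℝ, x ^ 2 * rexp (-(1/2) * x ^ 2) = Real.sqrt (2 * π) := by
    have habs : ∫ x : ℝ, |x| ^ 2 * rexp (-(1/2) * |x| ^ 2)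
        = 2 * ∫ x in Set.Ioi (0:ℝ), x ^ 2 * rexp (-(1/2) * x ^ 2) :=
      integral_comp_abs (f := fun t => t ^ 2 * rexp (-(1/2) * t ^ 2))
    simp only [_root_.sq_abs] at habs
    rw [habs]
    have h3 : ∫ x in Set.Ioi (0:ℝ), x ^ 2 * rexp (-(1/2) * x ^ 2)
        = ∫ x in Set.Ioi (0:ℝ), x ^ (2:ℝ) * rexp (-(1/2) * x ^ (2:ℝ)) := by
      refine setIntegral_congr_fun measurableSet_Ioi (fun x _ => ?_)
      rw [show ((2:ℝ) = ((2:ℕ):ℝ)) by norm_num, Real.rpow_natCast]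
    rw [h3, _root_.integral_rpow_mul_exp_neg_mul_rpow (by norm_num) (by norm_num) (by norm_num)]
    have hΓ : Real.Gamma (((2:ℝ) + 1) / 2) = Real.sqrt π / 2 := by
      rw [show ((2:ℝ) + 1) / 2 = 1/2 + 1 by norm_num, Real.Gamma_add_one (by norm_num),
        Real.Gamma_one_half_eq]
      ring
    rw [hΓ, show (-((2:ℝ)+1)/2 : ℝ) = -(3/2) by norm_num]
    have hpow : ((1:ℝ)/2) ^ (-(3/2) : ℝ) = 2 * Real.sqrt 2 := by
      rw [one_div, Real.inv_rpow (by norm_num), Real.rpow_neg (by norm_num), inv_inv,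
        show ((3:ℝ)/2 : ℝ) = 1 + 1/2 by norm_num, Real.rpow_add (by norm_num), Real.rpow_one,
        ← Real.sqrt_eq_rpow]
    rw [hpow, Real.sqrt_mul (by norm_num) π, one_div]
    ring
  rw [h2, inv_mul_cancel₀ (by positivity)]

lemma inner_eval (p c γ : ℝ) (hp0 : 0 ≤ p) (hp1 : p ≤ 1)
    (hpos : 0 < c * (1 - p)) (hlt : c * (1 - p) < 2 * γ) (u₃ : ℝ) :
    ∫ u₂, rexp (c * (Real.sqrt (1 - p) * u₂ + Real.sqrt p * u₃) ^ 2 / (4 * γ))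
        ∂(gaussianReal 0 1)
      = Real.sqrt (2 * γ / (2 * γ - c * (1 - p)))
          * rexp (c * p * u₃ ^ 2 / (2 * (2 * γ - c * (1 - p)))) := by
  have hγ : 0 < γ := by linarith
  set a := Real.sqrt (1 - p) with ha
  set m := Real.sqrt p * u₃ with hm
  have ha2 : a ^ 2 = 1 - p := Real.sq_sqrt (by linarith)
  have hm2 : m ^ 2 = p * u₃ ^ 2 := by rw [hm, mul_pow, Real.sq_sqrt hp0]
  set K := 2 * γ - c * (1 - p) with hK
  have hKpos : 0 < K := by rw [hK]; linarith
  set B := c * (1 - p) / (4 * γ) - 1 / 2 with hB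
  have hBneg : B < 0 := by
    rw [hB]
    have : c * (1 - p) / (4 * γ) < 1 / 2 := by
      rw [div_lt_div_iff₀ (by linarith) (by norm_num)]; linarith
    linarith
  have hnB : -B = K / (4 * γ) := by rw [hB, hK]; field_simp; ring
  set C := c * a * m / (2 * γ) with hC
  set D := c * m ^ 2 / (4 * γ) with hD
  rw [integral_gaussianReal01]
  have hpt : ∀ x : ℝ, gaussianPDFReal 0 1 x * rexp (c * (a * x + m) ^ 2 / (4 * γ))
      = (Real.sqrt (2 * π))⁻¹ * rexp (B * x ^ 2 + C * x + D) := by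
    intro x
    simp only [gaussianPDFReal, NNReal.coe_one, mul_one, sub_zero]
    rw [mul_assoc, ← Real.exp_add]
    congr 2
    rw [hB, hC, hD, ← ha2]
    field_simp
    ring
  simp_rw [hpt, MeasureTheory.integral_const_mul, integral_rexp_quadratic hBneg C D]
  rw [← mul_assoc]
  congr 1
  · rw [hnB, ← Real.sqrt_inv, ← Real.sqrt_mul (by positivity)]
    congr 1
    field_simp
    ring
  · congr 1
    have hC2 : C ^ 2 = c ^ 2 * (1 - p) * (p * u₃ ^ 2) / (4 * γ ^ 2) := by
      rw [hC, div_pow, mul_pow, mul_pow, ha2, hm2]; ring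
    have hBalt : B = -(K / (4 * γ)) := by linarith [hnB]
    have hKne : (2:ℝ) * γ - c * (1 - p) ≠ 0 := by rw [← hK]; exact ne_of_gt hKpos
    have h4B : 4 * B = -(K / γ) := by rw [hBalt]; field_simp
    rw [hD, hm2, hC2, h4B, hK]
    rw [div_neg, sub_neg_eq_add, div_div_eq_mul_div]
    rw [← hK]
    field_simp
    ring

lemma integrable_pdf_sq : Integrable (fun x : ℝ => gaussianPDFReal 0 1 x * x ^ 2) := by
  have h := (integrable_rpow_mul_exp_neg_mul_sq (b := 1/2) (by norm_num)
    (s := ((2:ℕ):ℝ)) (by norm_num)).const_mul (Real.sqrt (2 * π))⁻¹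
  refine h.congr (Filter.Eventually.of_forall fun x => ?_)
  simp only [Real.rpow_natCast]
  simp only [gaussianPDFReal, NNReal.coe_one, mul_one, sub_zero]
  ring_nf

/-- Closed-form evaluation of the spherical part at the second level of lifting. -/
theorem spherical_second_level (p c γ : ℝ) (hp0 : 0 ≤ p) (hp1 : p ≤ 1)
    (hpos : 0 < c * (1 - p)) (hlt : c * (1 - p) < 2 * γ) :
    ∫ u₃, (1 / c) * Real.log (∫ u₂,
        Real.exp (c * (Real.sqrt (1 - p) * u₂ + Real.sqrt p * u₃) ^ 2 / (4 * γ))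
          ∂(gaussianReal 0 1)) ∂(gaussianReal 0 1) =
      -(1 / (2 * c)) * Real.log ((2 * γ - c * (1 - p)) / (2 * γ)) +
        p / (2 * (2 * γ - c * (1 - p))) := by
  have hγ : 0 < γ := by linarith
  have h1p : 0 < 1 - p := by
    by_contra h
    push_neg at h
    have h0 : 1 - p = 0 := le_antisymm h (by linarith)
    rw [h0, mul_zero] at hpos
    exact lt_irrefl 0 hpos
  have hc : 0 < c := by
    have h2 := div_pos hpos h1p
    rwa [mul_div_assoc, div_self (ne_of_gt h1p), mul_one] at h2
  have hKpos : 0 < 2 * γ - c * (1 - p) := by linarith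
  set K := 2 * γ - c * (1 - p) with hK
  set A := -(1 / (2 * c)) * Real.log (K / (2 * γ)) with hA
  set E := p / (2 * K) with hE
  have hinner : ∀ u₃ : ℝ, (1 / c) * Real.log (∫ u₂,
      Real.exp (c * (Real.sqrt (1 - p) * u₂ + Real.sqrt p * u₃) ^ 2 / (4 * γ))
        ∂(gaussianReal 0 1)) = A + E * u₃ ^ 2 := by
    intro u₃
    rw [inner_eval p c γ hp0 hp1 hpos hlt u₃, ← hK]
    have hs : (0:ℝ) < 2 * γ / K := by positivity
    rw [Real.log_mul (by positivity) (Real.exp_ne_zero _), Real.log_exp,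
      Real.log_sqrt (le_of_lt hs), show 2 * γ / K = (K / (2 * γ))⁻¹ by rw [inv_div],
      Real.log_inv, hA, hE]
    field_simp
  simp_rw [hinner, integral_gaussianReal01]
  have hpt : ∀ x : ℝ, gaussianPDFReal 0 1 x * (A + E * x ^ 2)
      = gaussianPDFReal 0 1 x * A + E * (gaussianPDFReal 0 1 x * x ^ 2) := by
    intro x; ring
  simp_rw [hpt]
  rw [integral_add ((integrable_gaussianPDFReal 0 1).mul_const A)
    (integrable_pdf_sq.const_mul E), MeasureTheory.integral_const_mul,
    MeasureTheory.integral_mul_const, gaussian_second_moment,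
    integral_gaussianPDFReal_eq_one 0 one_ne_zero, one_mul, mul_one, hA, hE]
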